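/- (Integrated smoothing estimate for the fractional Boussinesq–Coriolis–Stratification semigroup.) Let I = (0,∞), 0 ≤ μ < 3, 1 ≤ q < ∞, 1 ≤ r ≤ ∞, s ∈ ℝ, 1/2 ≤ α < 5/2, ν > 0, Ω ≠ 0 and N > 0. Then there is a constant C > 0, independent of Ω and N, such that for every ℂ⁴-valued v₀ ∈ FN^s_{q,μ,r}(ℝ³), ‖S^α_{Ω,N}(·)v₀‖_{𝓛^1(I;FN^{s+2α}_{q,μ,r})} ≤ (C L/ν) ‖v₀‖_{FN^s_{q,μ,r}}, where L = max{2, |Ω|/N, N/|Ω|}. -/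

import Mathlib

open MeasureTheory ENNReal

noncomputable section

abbrev En (n : ℕ) := EuclideanSpace ℝ (Fin n)

/-- The homogeneous Morrey norm `‖f‖_{q,μ} = sup_{x₀, d>0} d^{-μ/q} ‖f‖_{L^q(B_d(x₀))}`. -/
noncomputable def morreyNorm {n : ℕ} {F : Type*} [NormedAddCommGroup F]
    (q μ : ℝ) (f : En n → F) : ℝ≥0∞ :=
  ⨆ (x₀ : En n) (d : ℝ) (_ : 0 < d),
    ENNReal.ofReal (d ^ (-(μ / q))) *
      eLpNorm f (ENNReal.ofReal q) (volume.restrict (Metric.ball x₀ d))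

/-- ℓʳ norm over ℤ of a family of extended reals. -/
noncomputable def lrNorm (r : ℝ≥0∞) (a : ℤ → ℝ≥0∞) : ℝ≥0∞ :=
  if r = ⊤ then ⨆ j, a j else (∑' j, a j ^ r.toReal) ^ (1 / r.toReal)

/-- A Littlewood–Paley function: smooth, `0 ≤ φ ≤ 1`, supported in the annulus
`{3/4 ≤ |ξ| ≤ 8/3}`, with `∑_{j∈ℤ} φ(2^{-j}ξ) = 1` for `ξ ≠ 0`. -/
def IsLP {n : ℕ} (φ : En n → ℝ) : Prop :=
  ContDiff ℝ (⊤ : ℕ∞) φ ∧ (∀ ξ, 0 ≤ φ ξ) ∧ (∀ ξ, φ ξ ≤ 1) ∧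
    (∀ ξ, φ ξ ≠ 0 → 3 / 4 ≤ ‖ξ‖ ∧ ‖ξ‖ ≤ 8 / 3) ∧
    ∀ ξ : En n, ξ ≠ 0 → HasSum (fun j : ℤ => φ ((2 : ℝ) ^ (-j) • ξ)) 1

/-- Fourier–Besov–Morrey norm `‖f‖_{FN^s_{q,μ,r}}`, in terms of the Fourier transform. -/
noncomputable def fbmNorm {n : ℕ} {F : Type*} [NormedAddCommGroup F] [NormedSpace ℝ F]
    (s q μ : ℝ) (r : ℝ≥0∞) (φ : En n → ℝ) (fhat : En n → F) : ℝ≥0∞ :=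
  lrNorm r fun j : ℤ =>
    ENNReal.ofReal ((2 : ℝ) ^ ((j : ℝ) * s)) *
      morreyNorm q μ (fun ξ => φ ((2 : ℝ) ^ (-j) • ξ) • fhat ξ)

/-- Chemin–Lerner norm `𝓛¹((0,∞); FN^s_{q,μ,r})`, in terms of the Fourier transform. -/
noncomputable def clNorm1 {n : ℕ} {F : Type*} [NormedAddCommGroup F] [NormedSpace ℝ F]
    (s q μ : ℝ) (r : ℝ≥0∞) (φ : En n → ℝ) (fhat : ℝ → En n → F) : ℝ≥0∞ :=
  lrNorm r fun j : ℤ =>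
    ENNReal.ofReal ((2 : ℝ) ^ ((j : ℝ) * s)) *
      ∫⁻ t in Set.Ioi (0 : ℝ), morreyNorm q μ (fun ξ => φ ((2 : ℝ) ^ (-j) • ξ) • fhat t ξ)

/-- Chemin–Lerner norm `𝓛^∞((0,∞); FN^s_{q,μ,r})`, in terms of the Fourier transform. -/
noncomputable def clNormInf {n : ℕ} {F : Type*} [NormedAddCommGroup F] [NormedSpace ℝ F]
    (s q μ : ℝ) (r : ℝ≥0∞) (φ : En n → ℝ) (fhat : ℝ → En n → F) : ℝ≥0∞ :=
  lrNorm r fun j : ℤ =>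
    ENNReal.ofReal ((2 : ℝ) ^ ((j : ℝ) * s)) *
      essSup (fun t => morreyNorm q μ (fun ξ => φ ((2 : ℝ) ^ (-j) • ξ) • fhat t ξ))
        (volume.restrict (Set.Ioi (0 : ℝ)))

/-- Norm of `X_r = 𝓛^∞(I;FN^s_{q,μ,r}) ∩ 𝓛^1(I;FN^{s+2α}_{q,μ,r})`. -/
noncomputable def xrNorm {n : ℕ} {F : Type*} [NormedAddCommGroup F] [NormedSpace ℝ F]
    (s α q μ : ℝ) (r : ℝ≥0∞) (φ : En n → ℝ) (fhat : ℝ → En n → F) : ℝ≥0∞ :=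
  clNormInf s q μ r φ fhat + clNorm1 (s + 2 * α) q μ r φ fhat

/-- `|ξ|' = √(N²ξ₁² + N²ξ₂² + Ω²ξ₃²)`. -/
noncomputable def nxp (Ω N : ℝ) (ξ : En 3) : ℝ :=
  Real.sqrt (N ^ 2 * (ξ 0) ^ 2 + N ^ 2 * (ξ 1) ^ 2 + Ω ^ 2 * (ξ 2) ^ 2)

noncomputable def M1 (Ω N : ℝ) (ξ : En 3) : Matrix (Fin 4) (Fin 4) ℝ :=
  ((nxp Ω N ξ) ^ 2)⁻¹ •
    !![Ω ^ 2 * (ξ 2) ^ 2, 0, -(N ^ 2 * ξ 0 * ξ 2), Ω * N * ξ 1 * ξ 2;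
       0, Ω ^ 2 * (ξ 2) ^ 2, -(N ^ 2 * ξ 1 * ξ 2), -(Ω * N * ξ 0 * ξ 2);
       -(Ω ^ 2 * ξ 0 * ξ 2), -(Ω ^ 2 * ξ 1 * ξ 2), N ^ 2 * ((ξ 0) ^ 2 + (ξ 1) ^ 2), 0;
       Ω * N * ξ 1 * ξ 2, -(Ω * N * ξ 0 * ξ 2), 0, N ^ 2 * ((ξ 0) ^ 2 + (ξ 1) ^ 2)]

noncomputable def M2 (Ω N : ℝ) (ξ : En 3) : Matrix (Fin 4) (Fin 4) ℝ :=
  (‖ξ‖ * nxp Ω N ξ)⁻¹ •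
    !![0, -(Ω * (ξ 2) ^ 2), Ω * ξ 1 * ξ 2, N * ξ 0 * ξ 2;
       Ω * (ξ 2) ^ 2, 0, -(Ω * ξ 0 * ξ 2), N * ξ 1 * ξ 2;
       -(Ω * ξ 1 * ξ 2), Ω * ξ 0 * ξ 2, 0, -(N * ((ξ 0) ^ 2 + (ξ 1) ^ 2));
       -(N * ξ 0 * ξ 2), -(N * ξ 1 * ξ 2), N * ((ξ 0) ^ 2 + (ξ 1) ^ 2), 0]

noncomputable def M3 (Ω N : ℝ) (ξ : En 3) : Matrix (Fin 4) (Fin 4) ℝ :=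
  ((nxp Ω N ξ) ^ 2)⁻¹ •
    !![N ^ 2 * (ξ 1) ^ 2, -(N ^ 2 * ξ 0 * ξ 1), 0, -(Ω * N * ξ 1 * ξ 2);
       -(N ^ 2 * ξ 0 * ξ 1), N ^ 2 * (ξ 0) ^ 2, 0, Ω * N * ξ 0 * ξ 2;
       0, 0, 0, 0;
       -(Ω * N * ξ 1 * ξ 2), Ω * N * ξ 0 * ξ 2, 0, Ω ^ 2 * (ξ 2) ^ 2]

/-- Fourier symbol of the fractional Boussinesq–Coriolis–Stratification semigroup
`S^α_{Ω,N}(t)`. -/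
noncomputable def symS (ν α Ω N t : ℝ) (ξ : En 3) : Matrix (Fin 4) (Fin 4) ℝ :=
  Real.exp (-(ν * t * ‖ξ‖ ^ (2 * α))) •
    (Real.cos (t * nxp Ω N ξ / ‖ξ‖) • M1 Ω N ξ +
      Real.sin (t * nxp Ω N ξ / ‖ξ‖) • M2 Ω N ξ + M3 Ω N ξ)

/-- Action of `S^α_{Ω,N}(t)` on the Fourier side: `(S(t)v₀)^ = [S(t)]^ v̂₀`. -/
noncomputable def applyS (ν α Ω N t : ℝ) (v0 : En 3 → Fin 4 → ℂ) : En 3 → Fin 4 → ℂ :=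
  fun ξ => ((symS ν α Ω N t ξ).map (fun x : ℝ => (x : ℂ))).mulVec (v0 ξ)


/-! ### Auxiliary lemmas -/

section Aux

open Real Set

lemma my_abs_le_of_sq_le_sq {a b : ℝ} (hb : 0 ≤ b) (h : a ^ 2 ≤ b ^ 2) : |a| ≤ b := by
  rw [← Real.sqrt_sq_eq_abs, ← Real.sqrt_sq hb]
  exact Real.sqrt_le_sqrt h

lemma inv_bound {n raw L : ℝ} (hn : 0 ≤ n) (hL : 0 ≤ L) (h : |raw| ≤ L * n) :
    |n⁻¹ * raw| ≤ L := by
  rcases eq_or_lt_of_le hn with h0 | h0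
  · have hraw : raw = 0 := by
      have h' : |raw| ≤ 0 := h.trans_eq (by rw [← h0, mul_zero])
      exact abs_eq_zero.1 (le_antisymm h' (abs_nonneg _))
    simp [hraw, hL]
  · rw [abs_mul, abs_inv, abs_of_pos h0, inv_mul_le_iff₀ h0]
    linarith [h]

lemma comp_le_norm (ξ : En 3) (i : Fin 3) : |ξ i| ≤ ‖ξ‖ := by
  rw [EuclideanSpace.norm_eq ξ, ← Real.sqrt_sq_eq_abs]
  apply Real.sqrt_le_sqrt
  calc ξ i ^ 2 = ‖ξ i‖ ^ 2 := by rw [Real.norm_eq_abs, sq_abs]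
  _ ≤ _ := Finset.single_le_sum (f := fun j => ‖ξ j‖ ^ 2) (fun j _ => by positivity)
        (Finset.mem_univ i)

lemma norm_sq_eq (ξ : En 3) : ‖ξ‖ ^ 2 = (ξ 0) ^ 2 + (ξ 1) ^ 2 + (ξ 2) ^ 2 := by
  rw [EuclideanSpace.norm_eq ξ, Real.sq_sqrt (by positivity)]
  simp [Fin.sum_univ_three, Real.norm_eq_abs, sq_abs]

section MatBound

variable {Ω N L : ℝ}

set_option maxHeartbeats 2000000 in
/-- Bound for entries of `M1` and `M3`. -/
lemma M13_bound (ξ : En 3) (hΩ : Ω ≠ 0) (hN : 0 < N) (hL2 : 2 ≤ L)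
    (hNA : N ≤ L * |Ω|) (hAN : |Ω| ≤ L * N) (i k : Fin 4) :
    |M1 Ω N ξ i k| ≤ L ∧ |M3 Ω N ξ i k| ≤ L := by
  have hA : (0:ℝ) < |Ω| := abs_pos.2 hΩ
  have hL0 : (0:ℝ) ≤ L := by linarith
  have hn2 : (nxp Ω N ξ) ^ 2
      = N ^ 2 * (ξ 0) ^ 2 + N ^ 2 * (ξ 1) ^ 2 + Ω ^ 2 * (ξ 2) ^ 2 :=
    Real.sq_sqrt (by positivity)
  have hNA2 : N ^ 2 ≤ L ^ 2 * Ω ^ 2 := by nlinarith [sq_abs Ω]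
  have hAN2 : Ω ^ 2 ≤ L ^ 2 * N ^ 2 := by nlinarith [sq_abs Ω]
  have hLL : (1:ℝ) ≤ L ^ 2 := by nlinarith
  set x := ξ 0 with hx
  set y := ξ 1 with hy
  set z := ξ 2 with hz
  set n : ℝ := N ^ 2 * x ^ 2 + N ^ 2 * y ^ 2 + Ω ^ 2 * z ^ 2 with hn
  have hn0 : (0:ℝ) ≤ n := by rw [hn]; positivity
  have e1 : N ^ 2 * x ^ 2 ≤ n := by rw [hn]; nlinarith [sq_nonneg (N*y), sq_nonneg (Ω*z)]
  have e2 : N ^ 2 * y ^ 2 ≤ n := by rw [hn]; nlinarith [sq_nonneg (N*x), sq_nonneg (Ω*z)]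
  have e3 : Ω ^ 2 * z ^ 2 ≤ n := by rw [hn]; nlinarith [sq_nonneg (N*x), sq_nonneg (N*y)]
  have eB : N ^ 2 * x ^ 2 + N ^ 2 * y ^ 2 ≤ n := by rw [hn]; nlinarith [sq_nonneg (Ω*z)]
  have hnn2 : n ^ 2 ≤ L ^ 2 * n ^ 2 := by nlinarith [mul_le_mul_of_nonneg_right hLL (sq_nonneg n)]
  have hzz : N ^ 2 * z ^ 2 ≤ L ^ 2 * (Ω ^ 2 * z ^ 2) := by
    nlinarith [mul_le_mul_of_nonneg_right hNA2 (sq_nonneg z)]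
  have hxx : Ω ^ 2 * x ^ 2 ≤ L ^ 2 * (N ^ 2 * x ^ 2) := by
    nlinarith [mul_le_mul_of_nonneg_right hAN2 (sq_nonneg x)]
  have hyy : Ω ^ 2 * y ^ 2 ≤ L ^ 2 * (N ^ 2 * y ^ 2) := by
    nlinarith [mul_le_mul_of_nonneg_right hAN2 (sq_nonneg y)]
  have hLn0 : (0:ℝ) ≤ L * n := mul_nonneg hL0 hn0
  have tA : |Ω ^ 2 * z ^ 2| ≤ L * n := my_abs_le_of_sq_le_sq hLn0
    (by nlinarith [mul_le_mul e3 e3 (by positivity) hn0, hnn2])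
  have tB : |N ^ 2 * (x ^ 2 + y ^ 2)| ≤ L * n := my_abs_le_of_sq_le_sq hLn0
    (by nlinarith [mul_le_mul eB eB (by positivity) hn0, hnn2])
  have tC0 : |Ω * N * x * z| ≤ L * n := my_abs_le_of_sq_le_sq hLn0
    (by nlinarith [mul_le_mul e1 e3 (by positivity) hn0, hnn2])
  have tC1 : |Ω * N * y * z| ≤ L * n := my_abs_le_of_sq_le_sq hLn0
    (by nlinarith [mul_le_mul e2 e3 (by positivity) hn0, hnn2])
  have tD0 : |N ^ 2 * x * z| ≤ L * n := my_abs_le_of_sq_le_sq hLn0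
    (by nlinarith [mul_le_mul e1 hzz (by positivity) hn0,
        mul_le_mul_of_nonneg_left e3 (mul_nonneg (sq_nonneg L) hn0)])
  have tD1 : |N ^ 2 * y * z| ≤ L * n := my_abs_le_of_sq_le_sq hLn0
    (by nlinarith [mul_le_mul e2 hzz (by positivity) hn0,
        mul_le_mul_of_nonneg_left e3 (mul_nonneg (sq_nonneg L) hn0)])
  have tE0 : |Ω ^ 2 * x * z| ≤ L * n := my_abs_le_of_sq_le_sq hLn0
    (by nlinarith [mul_le_mul hxx e3 (by positivity) (by positivity),
        mul_le_mul_of_nonneg_left e1 (mul_nonneg (sq_nonneg L) hn0)])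
  have tE1 : |Ω ^ 2 * y * z| ≤ L * n := my_abs_le_of_sq_le_sq hLn0
    (by nlinarith [mul_le_mul hyy e3 (by positivity) (by positivity),
        mul_le_mul_of_nonneg_left e2 (mul_nonneg (sq_nonneg L) hn0)])
  have tF : |N ^ 2 * x * y| ≤ L * n := my_abs_le_of_sq_le_sq hLn0
    (by nlinarith [mul_le_mul e1 e2 (by positivity) hn0, hnn2])
  have tG0 : |N ^ 2 * x ^ 2| ≤ L * n := my_abs_le_of_sq_le_sq hLn0
    (by nlinarith [mul_le_mul e1 e1 (by positivity) hn0, hnn2])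
  have tG1 : |N ^ 2 * y ^ 2| ≤ L * n := my_abs_le_of_sq_le_sq hLn0
    (by nlinarith [mul_le_mul e2 e2 (by positivity) hn0, hnn2])
  have key : ∀ m : ℝ, |m| ≤ L * n → |((nxp Ω N ξ) ^ 2)⁻¹ * m| ≤ L := fun m hm =>
    inv_bound (by rw [hn2]; exact hn0) hL0
      (by rw [hn2]; exact hm)
  constructor <;>
  · fin_cases i <;> fin_cases k <;> simp only [M1, M3, Matrix.smul_apply, smul_eq_mul] <;>
      simp [← hx, ← hy, ← hz, Matrix.vecHead, Matrix.vecTail] <;>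
    first
      | exact hL0
      | simpa using key _ tA | simpa using key _ tB | simpa using key _ tC0 | simpa using key _ tC1
      | simpa using key _ tD0 | simpa using key _ tD1 | simpa using key _ tE0 | simpa using key _ tE1
      | simpa using key _ tF | simpa using key _ tG0 | simpa using key _ tG1

set_option maxHeartbeats 2000000 in
/-- Bound for entries of `M2`. -/
lemma M2_bound (ξ : En 3) (hΩ : Ω ≠ 0) (hN : 0 < N) (hL2 : 2 ≤ L)
    (i k : Fin 4) : |M2 Ω N ξ i k| ≤ L := by
  have hA : (0:ℝ) < |Ω| := abs_pos.2 hΩ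
  have hL0 : (0:ℝ) ≤ L := by linarith
  have hp2 : (nxp Ω N ξ) ^ 2
      = N ^ 2 * (ξ 0) ^ 2 + N ^ 2 * (ξ 1) ^ 2 + Ω ^ 2 * (ξ 2) ^ 2 :=
    Real.sq_sqrt (by positivity)
  have hr2 : ‖ξ‖ ^ 2 = (ξ 0) ^ 2 + (ξ 1) ^ 2 + (ξ 2) ^ 2 := norm_sq_eq ξ
  have hLL : (1:ℝ) ≤ L ^ 2 := by nlinarith
  set x := ξ 0 with hx
  set y := ξ 1 with hy
  set z := ξ 2 with hz
  set p : ℝ := nxp Ω N ξ with hp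
  set w : ℝ := ‖ξ‖ with hw
  have hp0 : (0:ℝ) ≤ p := Real.sqrt_nonneg _
  have hw0 : (0:ℝ) ≤ w := norm_nonneg _
  have q1 : N ^ 2 * x ^ 2 ≤ p ^ 2 := by rw [hp2]; nlinarith [sq_nonneg (N*y), sq_nonneg (Ω*z)]
  have q2 : N ^ 2 * y ^ 2 ≤ p ^ 2 := by rw [hp2]; nlinarith [sq_nonneg (N*x), sq_nonneg (Ω*z)]
  have q3 : Ω ^ 2 * z ^ 2 ≤ p ^ 2 := by rw [hp2]; nlinarith [sq_nonneg (N*x), sq_nonneg (N*y)]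
  have r1 : x ^ 2 ≤ w ^ 2 := by rw [hr2]; nlinarith [sq_nonneg y, sq_nonneg z]
  have r2 : y ^ 2 ≤ w ^ 2 := by rw [hr2]; nlinarith [sq_nonneg x, sq_nonneg z]
  have r3 : z ^ 2 ≤ w ^ 2 := by rw [hr2]; nlinarith [sq_nonneg x, sq_nonneg y]
  have r12 : x ^ 2 + y ^ 2 ≤ w ^ 2 := by rw [hr2]; nlinarith [sq_nonneg z]
  have hLwp0 : (0:ℝ) ≤ L * (w * p) := by positivity
  have hbig : w ^ 2 * p ^ 2 ≤ L ^ 2 * (w * p) ^ 2 := by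
    nlinarith [mul_le_mul_of_nonneg_right hLL (mul_nonneg (sq_nonneg w) (sq_nonneg p))]
  have u1 : |Ω * z ^ 2| ≤ L * (w * p) := my_abs_le_of_sq_le_sq hLwp0
    (by nlinarith [mul_le_mul q3 r3 (sq_nonneg z) (sq_nonneg p), hbig])
  have u2x : |Ω * x * z| ≤ L * (w * p) := my_abs_le_of_sq_le_sq hLwp0
    (by nlinarith [mul_le_mul q3 r1 (sq_nonneg x) (sq_nonneg p), hbig])
  have u2y : |Ω * y * z| ≤ L * (w * p) := my_abs_le_of_sq_le_sq hLwp0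
    (by nlinarith [mul_le_mul q3 r2 (sq_nonneg y) (sq_nonneg p), hbig])
  have u3x : |N * x * z| ≤ L * (w * p) := my_abs_le_of_sq_le_sq hLwp0
    (by nlinarith [mul_le_mul q1 r3 (sq_nonneg z) (sq_nonneg p), hbig])
  have u3y : |N * y * z| ≤ L * (w * p) := my_abs_le_of_sq_le_sq hLwp0
    (by nlinarith [mul_le_mul q2 r3 (sq_nonneg z) (sq_nonneg p), hbig])
  have u4 : |N * (x ^ 2 + y ^ 2)| ≤ L * (w * p) := my_abs_le_of_sq_le_sq hLwp0
    (by nlinarith [mul_le_mul (by linarith : N ^ 2 * x ^ 2 + N ^ 2 * y ^ 2 ≤ 2 * p ^ 2) r12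
          (by positivity) (by positivity),
        mul_le_mul_of_nonneg_right (by nlinarith : (2:ℝ) ≤ L ^ 2)
          (mul_nonneg (sq_nonneg w) (sq_nonneg p))])
  have key : ∀ m : ℝ, |m| ≤ L * (w * p) → |p⁻¹ * w⁻¹ * m| ≤ L := fun m hm => by
    rw [show p⁻¹ * w⁻¹ * m = (w * p)⁻¹ * m by rw [mul_inv]; ring]
    exact inv_bound (mul_nonneg hw0 hp0) hL0 hm
  fin_cases i <;> fin_cases k <;> simp only [M2, Matrix.smul_apply, smul_eq_mul] <;>
    simp [← hx, ← hy, ← hz, ← hp, ← hw, Matrix.vecHead, Matrix.vecTail] <;>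
  first
    | exact hL0
    | simpa using key _ u1 | simpa using key _ u2x | simpa using key _ u2y
    | simpa using key _ u3x | simpa using key _ u3y | simpa using key _ u4


end MatBound

end Aux

section Operator

variable {Ω N L : ℝ}

lemma symS_entry_bound (ξ : En 3) (hΩ : Ω ≠ 0) (hN : 0 < N) (hL2 : 2 ≤ L)
    (hNA : N ≤ L * |Ω|) (hAN : |Ω| ≤ L * N) (ν α t : ℝ) (i k : Fin 4) :
    |symS ν α Ω N t ξ i k| ≤ Real.exp (-(ν * t * ‖ξ‖ ^ (2 * α))) * (3 * L) := by
  have h1 := (M13_bound ξ hΩ hN hL2 hNA hAN i k).1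
  have h3 := (M13_bound ξ hΩ hN hL2 hNA hAN i k).2
  have h2 := M2_bound ξ hΩ hN hL2 i k
  have hL0 : (0:ℝ) ≤ L := by linarith
  simp only [symS, Matrix.smul_apply, Matrix.add_apply, smul_eq_mul]
  rw [abs_mul, Real.abs_exp]
  refine mul_le_mul_of_nonneg_left ?_ (Real.exp_nonneg _)
  set θ := t * nxp Ω N ξ / ‖ξ‖
  calc |Real.cos θ * M1 Ω N ξ i k + Real.sin θ * M2 Ω N ξ i k + M3 Ω N ξ i k|
      ≤ |Real.cos θ * M1 Ω N ξ i k| + |Real.sin θ * M2 Ω N ξ i k| + |M3 Ω N ξ i k| :=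
        abs_add_three _ _ _
    _ ≤ 3 * L := by
        rw [abs_mul, abs_mul]
        nlinarith [Real.abs_cos_le_one θ, Real.abs_sin_le_one θ, abs_nonneg (M1 Ω N ξ i k),
          abs_nonneg (M2 Ω N ξ i k), abs_nonneg (Real.cos θ), abs_nonneg (Real.sin θ)]

lemma applyS_norm_le (ξ : En 3) (hΩ : Ω ≠ 0) (hN : 0 < N) (hL2 : 2 ≤ L)
    (hNA : N ≤ L * |Ω|) (hAN : |Ω| ≤ L * N) (ν α t : ℝ) (v0 : En 3 → Fin 4 → ℂ) :
    ‖applyS ν α Ω N t v0 ξ‖ ≤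
      Real.exp (-(ν * t * ‖ξ‖ ^ (2 * α))) * (12 * L) * ‖v0 ξ‖ := by
  have hL0 : (0:ℝ) ≤ L := by linarith
  refine (pi_norm_le_iff_of_nonneg (by positivity)).2 fun i => ?_
  show ‖Matrix.mulVec _ _ i‖ ≤ _
  rw [Matrix.mulVec, dotProduct]
  calc ‖∑ k : Fin 4, ((symS ν α Ω N t ξ).map (fun x : ℝ => (x : ℂ))) i k * v0 ξ k‖
      ≤ ∑ k : Fin 4, ‖((symS ν α Ω N t ξ).map (fun x : ℝ => (x : ℂ))) i k * v0 ξ k‖ :=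
        norm_sum_le _ _
    _ ≤ ∑ _k : Fin 4, Real.exp (-(ν * t * ‖ξ‖ ^ (2 * α))) * (3 * L) * ‖v0 ξ‖ := by
        refine Finset.sum_le_sum fun k _ => ?_
        rw [norm_mul, Matrix.map_apply, Complex.norm_real]
        exact mul_le_mul (symS_entry_bound ξ hΩ hN hL2 hNA hAN ν α t i k)
          (norm_le_pi_norm (v0 ξ) k) (norm_nonneg _) (by positivity)
    _ = Real.exp (-(ν * t * ‖ξ‖ ^ (2 * α))) * (12 * L) * ‖v0 ξ‖ := by
        rw [Finset.sum_const, Finset.card_univ]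
        simp [Fintype.card_fin]
        ring

end Operator

section NormLemmas

open Set

lemma morrey_le {n : ℕ} {F : Type*} [NormedAddCommGroup F] [NormedSpace ℝ F]
    {q μ : ℝ} {c : ℝ} (hc : 0 ≤ c) {f g : En n → F} (h : ∀ ξ, ‖f ξ‖ ≤ c * ‖g ξ‖) :
    morreyNorm q μ f ≤ ENNReal.ofReal c * morreyNorm q μ g := by
  have key : ∀ (p : ℝ≥0∞) (m : Measure (En n)),
      eLpNorm f p m ≤ ENNReal.ofReal c * eLpNorm g p m := by
    intro p m
    have h1 : eLpNorm f p m ≤ eLpNorm (c • g) p m :=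
      eLpNorm_mono fun ξ => by
        rw [Pi.smul_apply, norm_smul, Real.norm_eq_abs, abs_of_nonneg hc]; exact h ξ
    refine h1.trans ?_
    calc eLpNorm (c • g) p m ≤ ‖c‖₊ • eLpNorm g p m := eLpNorm_const_smul_le
      _ = ENNReal.ofReal c * eLpNorm g p m := by
          rw [ENNReal.smul_def, smul_eq_mul, ← enorm_eq_nnnorm, ← ofReal_norm, Real.norm_eq_abs,
            abs_of_nonneg hc]
  refine iSup_le fun x0 => iSup_le fun d => iSup_le fun hd => ?_
  calc ENNReal.ofReal (d ^ (-(μ / q))) * eLpNorm f (ENNReal.ofReal q)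
        (volume.restrict (Metric.ball x0 d))
      ≤ ENNReal.ofReal (d ^ (-(μ / q))) * (ENNReal.ofReal c * eLpNorm g (ENNReal.ofReal q)
        (volume.restrict (Metric.ball x0 d))) := mul_le_mul_right (key _ _) _
    _ = ENNReal.ofReal c * (ENNReal.ofReal (d ^ (-(μ / q))) * eLpNorm g (ENNReal.ofReal q)
        (volume.restrict (Metric.ball x0 d))) := by ring
    _ ≤ ENNReal.ofReal c * morreyNorm q μ g := by
        refine mul_le_mul_right ?_ _
        exact le_iSup_of_le x0 (le_iSup_of_le d (le_iSup_of_le hd le_rfl))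

lemma lintegral_exp_decay {c K : ℝ} (hK : 0 ≤ K) (hc : 0 < c) :
    ∫⁻ t in Ioi (0:ℝ), ENNReal.ofReal (K * Real.exp (-(c * t)))
      = ENNReal.ofReal (K * c⁻¹) := by
  have hint : IntegrableOn (fun t : ℝ => Real.exp (-(c * t))) (Ioi 0) := by
    simpa [neg_mul] using exp_neg_integrableOn_Ioi 0 hc
  rw [← MeasureTheory.ofReal_integral_eq_lintegral_ofReal (hint.const_mul K)
    (Filter.Eventually.of_forall fun t => by positivity)]
  congr 1
  rw [integral_const_mul]
  congr 1
  have h := integral_comp_mul_left_Ioi (fun u => Real.exp (-u)) 0 hc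
  rw [mul_zero] at h
  rw [h, integral_exp_neg_Ioi, neg_zero, Real.exp_zero, smul_eq_mul, mul_one]

lemma lr_le {r : ℝ≥0∞} (hr : 1 ≤ r) {c : ℝ≥0∞} {a b : ℤ → ℝ≥0∞}
    (h : ∀ j, a j ≤ c * b j) : lrNorm r a ≤ c * lrNorm r b := by
  unfold lrNorm
  by_cases htop : r = ⊤
  · simp only [htop, if_pos]
    exact iSup_le fun j => (h j).trans (mul_le_mul_right (le_iSup b j) c)
  · simp only [htop, if_neg, if_false]
    have hp : 0 < r.toReal :=
      ENNReal.toReal_pos (by intro h0; rw [h0] at hr; exact absurd hr (by simp)) htop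
    calc (∑' j, a j ^ r.toReal) ^ (1 / r.toReal)
        ≤ (∑' j, (c * b j) ^ r.toReal) ^ (1 / r.toReal) := by
          refine ENNReal.rpow_le_rpow ?_ (by positivity)
          exact ENNReal.tsum_le_tsum fun j => ENNReal.rpow_le_rpow (h j) hp.le
      _ = (c ^ r.toReal * ∑' j, b j ^ r.toReal) ^ (1 / r.toReal) := by
          simp_rw [ENNReal.mul_rpow_of_nonneg _ _ hp.le, ENNReal.tsum_mul_left]
      _ = c * (∑' j, b j ^ r.toReal) ^ (1 / r.toReal) := by
          rw [ENNReal.mul_rpow_of_nonneg _ _ (by positivity : (0:ℝ) ≤ 1 / r.toReal),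
            ← ENNReal.rpow_mul, mul_one_div_cancel hp.ne', ENNReal.rpow_one]

end NormLemmas

/-- Integrated smoothing estimate for the fractional Boussinesq–Coriolis–Stratification
semigroup: `‖S^α_{Ω,N}(·)v₀‖_{𝓛^1((0,∞);FN^{s+2α}_{q,μ,r})} ≤ (C L/ν) ‖v₀‖_{FN^s_{q,μ,r}}`,
with `C` independent of `Ω` and `N`. -/
theorem semigroup_integrated_estimate (μ q s α : ℝ) (r : ℝ≥0∞)
    (hμ : 0 ≤ μ) (hμ' : μ < 3) (hq : 1 ≤ q)
    (hr : 1 ≤ r) (hα : 1 / 2 ≤ α) (hα' : α < 5 / 2)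
    (φ : En 3 → ℝ) (hφ : IsLP φ) :
    ∃ C > (0 : ℝ), ∀ ν > (0 : ℝ), ∀ Ω : ℝ, Ω ≠ 0 → ∀ N > (0 : ℝ),
      ∀ v0 : En 3 → Fin 4 → ℂ, AEStronglyMeasurable v0 volume →
        fbmNorm s q μ r φ v0 < ⊤ →
        clNorm1 (s + 2 * α) q μ r φ (fun t => applyS ν α Ω N t v0) ≤
          ENNReal.ofReal (C * max 2 (max (|Ω| / N) (N / |Ω|)) / ν) *
            fbmNorm s q μ r φ v0 := by
  refine ⟨64, by norm_num, ?_⟩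
  intro ν hν Ω hΩ N hN v0 _hmeas _hfin
  set L : ℝ := max 2 (max (|Ω| / N) (N / |Ω|)) with hLdef
  have hA : (0:ℝ) < |Ω| := abs_pos.2 hΩ
  have hL2 : (2:ℝ) ≤ L := le_max_left _ _
  have hL0 : (0:ℝ) ≤ L := by linarith
  have hNA : N ≤ L * |Ω| := by
    have h1 : N / |Ω| ≤ L := le_trans (le_max_right _ _) (le_max_right _ _)
    rw [div_le_iff₀ hA] at h1; linarith
  have hAN : |Ω| ≤ L * N := by
    have h1 : |Ω| / N ≤ L := le_trans (le_max_left _ _) (le_max_right _ _)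
    rw [div_le_iff₀ hN] at h1; linarith
  -- decay rates
  set b : ℤ → ℝ := fun j => (3 / 4 * (2:ℝ) ^ (j:ℤ)) ^ (2 * α) with hbdef
  have hb : ∀ j, 0 < b j := fun j => Real.rpow_pos_of_pos (by positivity) _
  -- Step 1: pointwise bound
  have step1 : ∀ (j : ℤ) (t : ℝ), 0 ≤ t → ∀ ξ : En 3,
      ‖φ ((2:ℝ) ^ (-j) • ξ) • applyS ν α Ω N t v0 ξ‖ ≤
        (12 * L * Real.exp (-(ν * b j * t))) * ‖φ ((2:ℝ) ^ (-j) • ξ) • v0 ξ‖ := by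
    intro j t ht ξ
    have hφ0 : 0 ≤ φ ((2:ℝ) ^ (-j) • ξ) := hφ.2.1 _
    by_cases hz : φ ((2:ℝ) ^ (-j) • ξ) = 0
    · rw [hz]; simp
    · have hsupp := (hφ.2.2.2.1 _ hz).1
      have h2j : (0:ℝ) < (2:ℝ) ^ (j:ℤ) := zpow_pos (by norm_num) _
      have h2j' : (0:ℝ) < (2:ℝ) ^ (-j:ℤ) := zpow_pos (by norm_num) _
      have hnorm : ‖(2:ℝ) ^ (-j) • ξ‖ = (2:ℝ) ^ (-j:ℤ) * ‖ξ‖ := by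
        rw [norm_smul, Real.norm_eq_abs, abs_of_pos h2j']
      rw [hnorm] at hsupp
      have hξ : 3 / 4 * (2:ℝ) ^ (j:ℤ) ≤ ‖ξ‖ := by
        have := mul_le_mul_of_nonneg_right hsupp h2j.le
        rw [mul_comm ((2:ℝ) ^ (-j:ℤ)) ‖ξ‖, mul_assoc, zpow_neg, inv_mul_cancel₀ h2j.ne',
          mul_one] at this
        linarith
      have hrp : b j ≤ ‖ξ‖ ^ (2 * α) :=
        Real.rpow_le_rpow (by positivity) hξ (by linarith)
      have hexp : Real.exp (-(ν * t * ‖ξ‖ ^ (2 * α))) ≤ Real.exp (-(ν * b j * t)) :=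
        Real.exp_le_exp.2 (by nlinarith [mul_nonneg hν.le ht])
      have happ := applyS_norm_le ξ hΩ hN hL2 hNA hAN ν α t v0
      have happ2 : ‖applyS ν α Ω N t v0 ξ‖ ≤
          Real.exp (-(ν * b j * t)) * (12 * L) * ‖v0 ξ‖ := by
        refine happ.trans ?_
        have := mul_le_mul_of_nonneg_right hexp (by positivity : (0:ℝ) ≤ 12 * L)
        exact mul_le_mul_of_nonneg_right this (norm_nonneg _)
      rw [norm_smul, norm_smul, Real.norm_eq_abs, abs_of_nonneg hφ0]
      calc φ ((2:ℝ) ^ (-j) • ξ) * ‖applyS ν α Ω N t v0 ξ‖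
          ≤ φ ((2:ℝ) ^ (-j) • ξ) * (Real.exp (-(ν * b j * t)) * (12 * L) * ‖v0 ξ‖) :=
            mul_le_mul_of_nonneg_left happ2 hφ0
        _ = (12 * L * Real.exp (-(ν * b j * t))) * (φ ((2:ℝ) ^ (-j) • ξ) * ‖v0 ξ‖) := by ring
  -- morrey norms of the blocks of v0
  set Mj : ℤ → ℝ≥0∞ := fun j =>
    morreyNorm q μ (fun ξ => φ ((2:ℝ) ^ (-j) • ξ) • v0 ξ) with hMj
  -- Step 3: integral bound
  have step3 : ∀ j : ℤ,
      (∫⁻ t in Set.Ioi (0:ℝ),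
        morreyNorm q μ (fun ξ => φ ((2:ℝ) ^ (-j) • ξ) • applyS ν α Ω N t v0 ξ)) ≤
      ENNReal.ofReal (12 * L * (ν * b j)⁻¹) * Mj j := by
    intro j
    have hc : 0 < ν * b j := mul_pos hν (hb j)
    calc (∫⁻ t in Set.Ioi (0:ℝ),
          morreyNorm q μ (fun ξ => φ ((2:ℝ) ^ (-j) • ξ) • applyS ν α Ω N t v0 ξ))
        ≤ ∫⁻ t in Set.Ioi (0:ℝ),
            ENNReal.ofReal (12 * L * Real.exp (-(ν * b j * t))) * Mj j := by
          refine MeasureTheory.setLIntegral_mono' measurableSet_Ioi fun t ht => ?_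
          exact morrey_le (by positivity) (step1 j t (le_of_lt ht))
      _ = (∫⁻ t in Set.Ioi (0:ℝ),
            ENNReal.ofReal (12 * L * Real.exp (-(ν * b j * t)))) * Mj j := by
          refine MeasureTheory.lintegral_mul_const'' _ ?_
          exact ((Real.measurable_exp.comp ((measurable_id.const_mul (ν * b j)).neg)).const_mul
            (12 * L)).ennreal_ofReal.aemeasurable
      _ = ENNReal.ofReal (12 * L * (ν * b j)⁻¹) * Mj j := by
          rw [lintegral_exp_decay (by positivity) hc]
  -- Step 4: constant computation
  have hconst : ∀ j : ℤ,
      (2:ℝ) ^ ((j:ℝ) * (s + 2 * α)) * (12 * L * (ν * b j)⁻¹) ≤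
        64 * L / ν * (2:ℝ) ^ ((j:ℝ) * s) := by
    intro j
    have hbj : b j = (3 / 4 : ℝ) ^ (2 * α) * (2:ℝ) ^ ((j:ℝ) * (2 * α)) := by
      simp only [hbdef]
      rw [Real.mul_rpow (by norm_num) (by positivity)]
      congr 1
      rw [← Real.rpow_intCast 2 j, ← Real.rpow_mul (by norm_num)]
    have h2add : (2:ℝ) ^ ((j:ℝ) * (s + 2 * α)) =
        (2:ℝ) ^ ((j:ℝ) * s) * (2:ℝ) ^ ((j:ℝ) * (2 * α)) := by
      rw [← Real.rpow_add (by norm_num)]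
      ring_nf
    set P : ℝ := (2:ℝ) ^ ((j:ℝ) * s) with hP
    set Q : ℝ := (2:ℝ) ^ ((j:ℝ) * (2 * α)) with hQ
    set G : ℝ := (3 / 4 : ℝ) ^ (2 * α) with hG
    have hPpos : 0 < P := Real.rpow_pos_of_pos (by norm_num) _
    have hQpos : 0 < Q := Real.rpow_pos_of_pos (by norm_num) _
    have hGpos : 0 < G := Real.rpow_pos_of_pos (by norm_num) _
    have hG5 : (3 / 4 : ℝ) ^ (5:ℝ) ≤ G :=
      Real.rpow_le_rpow_of_exponent_ge (by norm_num) (by norm_num) (by linarith)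
    have hG5' : (243 / 1024 : ℝ) ≤ G := by
      refine le_trans (le_of_eq ?_) hG5
      rw [show (5:ℝ) = ((5:ℕ):ℝ) by norm_num, Real.rpow_natCast]
      norm_num
    rw [h2add, hbj]
    rw [div_mul_eq_mul_div, ← sub_nonneg]
    have expand : 64 * L * P / ν - P * Q * (12 * L * (ν * (G * Q))⁻¹) =
        P * L * (64 * G - 12) / (ν * G) := by
      field_simp
    rw [expand]
    have : (0:ℝ) ≤ 64 * G - 12 := by linarith
    positivity
  -- Step 5: per-j bound in ℝ≥0∞
  have step5 : ∀ j : ℤ,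
      ENNReal.ofReal ((2:ℝ) ^ ((j:ℝ) * (s + 2 * α))) *
        (∫⁻ t in Set.Ioi (0:ℝ),
          morreyNorm q μ (fun ξ => φ ((2:ℝ) ^ (-j) • ξ) • applyS ν α Ω N t v0 ξ)) ≤
      ENNReal.ofReal (64 * L / ν) *
        (ENNReal.ofReal ((2:ℝ) ^ ((j:ℝ) * s)) * Mj j) := by
    intro j
    calc ENNReal.ofReal ((2:ℝ) ^ ((j:ℝ) * (s + 2 * α))) *
          (∫⁻ t in Set.Ioi (0:ℝ),
            morreyNorm q μ (fun ξ => φ ((2:ℝ) ^ (-j) • ξ) • applyS ν α Ω N t v0 ξ))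
        ≤ ENNReal.ofReal ((2:ℝ) ^ ((j:ℝ) * (s + 2 * α))) *
            (ENNReal.ofReal (12 * L * (ν * b j)⁻¹) * Mj j) :=
          mul_le_mul_right (step3 j) _
      _ = ENNReal.ofReal ((2:ℝ) ^ ((j:ℝ) * (s + 2 * α)) * (12 * L * (ν * b j)⁻¹)) * Mj j := by
          rw [ENNReal.ofReal_mul (show (0:ℝ) ≤ (2:ℝ) ^ ((j:ℝ) * (s + 2 * α)) by positivity),
            ENNReal.ofReal_mul (show (0:ℝ) ≤ 12 * L by positivity)]
          ring
      _ ≤ ENNReal.ofReal (64 * L / ν * (2:ℝ) ^ ((j:ℝ) * s)) * Mj j :=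
          mul_le_mul_left (ENNReal.ofReal_le_ofReal (hconst j)) _
      _ = ENNReal.ofReal (64 * L / ν) * (ENNReal.ofReal ((2:ℝ) ^ ((j:ℝ) * s)) * Mj j) := by
          rw [ENNReal.ofReal_mul (by positivity), mul_assoc]
  -- conclude
  exact lr_le hr step5

end
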